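/- Let f: S → ℝ be layer-wise (L⁰, L¹)-smooth and let 0 ≤ ζ < 1. Let X ∈ S and let g = [g_1,…,g_p] ∈ S satisfy ‖g_i − ∇_i f(X)‖_{(i)⋆} ≤ ζ ‖g_i‖_{(i)⋆} for all i. Suppose X⁺ = [X⁺_1,…,X⁺_p] is such that, for each i, X⁺_i minimizes X_i ↦ ⟨g_i, X_i⟩_{(i)} over the ball of radius t_i = (1−ζ)‖g_i‖_{(i)⋆} / (L⁰_i + (1+ζ) L¹_i ‖g_i‖_{(i)⋆}) centered at X_i. Then f(X⁺) ≤ f(X) − Σ_{i=1}^p (1−ζ)² ‖g_i‖_{(i)⋆}² / (2 (L⁰_i + (1+ζ) L¹_i ‖g_i‖_{(i)⋆})). -/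

import Mathlib

noncomputable section
open Finset

/-- Trace inner product `⟨A,B⟩ = tr(AᵀB)` on `m×n` real matrices (viewed as functions). -/
def tip {m n : ℕ} (A B : Fin m → Fin n → ℝ) : ℝ := ∑ a, ∑ b, A a b * B a b

/-- An arbitrary norm on the space of `m×n` real matrices. -/
structure MatNorm (m n : ℕ) where
  N : (Fin m → Fin n → ℝ) → ℝ
  pos : ∀ A, A ≠ 0 → 0 < N A
  zero : N 0 = 0
  smul : ∀ (c : ℝ) (A : Fin m → Fin n → ℝ), N (c • A) = |c| * N A
  triangle : ∀ A B, N (A + B) ≤ N A + N B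

/-- The dual norm `‖A‖⋆ = sup_{‖Z‖ ≤ 1} ⟨A, Z⟩`. -/
def MatNorm.dual {m n : ℕ} (nn : MatNorm m n) (A : Fin m → Fin n → ℝ) : ℝ :=
  sSup {r : ℝ | ∃ Z, nn.N Z ≤ 1 ∧ r = tip A Z}

/-- `Y` minimizes the linear functional `Z ↦ ⟨G, Z⟩` over the ball of radius `t`
centered at `C` (the linear minimization oracle). -/
def IsLMOMin {m n : ℕ} (nn : MatNorm m n) (G C : Fin m → Fin n → ℝ) (t : ℝ)
    (Y : Fin m → Fin n → ℝ) : Prop :=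
  nn.N (Y - C) ≤ t ∧ ∀ Z, nn.N (Z - C) ≤ t → tip G Y ≤ tip G Z


-- basic tip lemmas
lemma tip_zero_right {m n : ℕ} (A : Fin m → Fin n → ℝ) : tip A 0 = 0 := by
  simp [tip]

lemma tip_add_left {m n : ℕ} (A B Z : Fin m → Fin n → ℝ) :
    tip (A + B) Z = tip A Z + tip B Z := by
  simp [tip, add_mul, Finset.sum_add_distrib]

lemma tip_sub_left {m n : ℕ} (A B Z : Fin m → Fin n → ℝ) :
    tip (A - B) Z = tip A Z - tip B Z := by
  simp [tip, sub_mul, Finset.sum_sub_distrib]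

lemma tip_smul_right {m n : ℕ} (c : ℝ) (A Z : Fin m → Fin n → ℝ) :
    tip A (c • Z) = c * tip A Z := by
  simp [tip, Finset.mul_sum]; ring_nf
  exact Finset.sum_congr rfl fun a _ => Finset.sum_congr rfl fun b _ => by ring

lemma tip_sub_right {m n : ℕ} (A B Z : Fin m → Fin n → ℝ) :
    tip Z (A - B) = tip Z A - tip Z B := by
  simp [tip, mul_sub, Finset.sum_sub_distrib]

lemma tip_neg_right {m n : ℕ} (A Z : Fin m → Fin n → ℝ) :
    tip A (-Z) = -tip A Z := by
  simp [tip, Finset.sum_neg_distrib]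

-- MatNorm basics
namespace MatNorm
variable {m n : ℕ} (nn : MatNorm m n)

lemma N_nonneg (A : Fin m → Fin n → ℝ) : 0 ≤ nn.N A := by
  by_cases h : A = 0
  · simp [h, nn.zero]
  · exact (nn.pos A h).le

lemma N_neg (A : Fin m → Fin n → ℝ) : nn.N (-A) = nn.N A := by
  have := nn.smul (-1) A
  simpa using this

lemma eq_zero_of_N_le_zero {A : Fin m → Fin n → ℝ} (h : nn.N A ≤ 0) : A = 0 := by
  by_contra hA
  exact absurd h (not_le.mpr (nn.pos A hA))

lemma N_sum_le {ι : Type*} (s : Finset ι) (F : ι → Fin m → Fin n → ℝ) :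
    nn.N (∑ i ∈ s, F i) ≤ ∑ i ∈ s, nn.N (F i) := by
  classical
  induction s using Finset.cons_induction with
  | empty => simp [nn.zero]
  | cons a s ha ih =>
    rw [Finset.sum_cons, Finset.sum_cons]
    exact (nn.triangle _ _).trans (by linarith)

end MatNorm

def munit {m n : ℕ} (a : Fin m) (b : Fin n) : Fin m → Fin n → ℝ :=
  fun a' b' => if a' = a ∧ b' = b then 1 else 0

lemma munit_decomp {m n : ℕ} (Z : Fin m → Fin n → ℝ) :
    Z = ∑ a : Fin m, ∑ b : Fin n, Z a b • munit a b := by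
  funext a' b'
  simp only [Finset.sum_apply, Pi.smul_apply, munit, smul_eq_mul, mul_ite, mul_one,
    mul_zero, ite_and]
  rw [Finset.sum_comm]
  simp [Finset.sum_ite_eq']

lemma abs_entry_le_norm {m n : ℕ} (Z : Fin m → Fin n → ℝ) (a : Fin m) (b : Fin n) :
    |Z a b| ≤ ‖Z‖ :=
  calc |Z a b| = ‖Z a b‖ := rfl
  _ ≤ ‖Z a‖ := norm_le_pi_norm (Z a) b
  _ ≤ ‖Z‖ := norm_le_pi_norm Z a

namespace MatNorm
variable {m n : ℕ} (nn : MatNorm m n)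

/-- Upper bound: `N Z ≤ K ‖Z‖` for the sup norm. -/
lemma exists_upper_bound : ∃ K : ℝ, 0 ≤ K ∧ ∀ Z, nn.N Z ≤ K * ‖Z‖ := by
  refine ⟨∑ a : Fin m, ∑ b : Fin n, nn.N (munit a b),
    Finset.sum_nonneg fun a _ => Finset.sum_nonneg fun b _ => nn.N_nonneg _, fun Z => ?_⟩
  conv_lhs => rw [munit_decomp Z]
  calc nn.N (∑ a : Fin m, ∑ b : Fin n, Z a b • munit a b)
      ≤ ∑ a : Fin m, nn.N (∑ b : Fin n, Z a b • munit a b) := nn.N_sum_le _ _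
  _ ≤ ∑ a : Fin m, ∑ b : Fin n, nn.N (Z a b • munit a b) :=
      Finset.sum_le_sum fun a _ => nn.N_sum_le _ _
  _ = ∑ a : Fin m, ∑ b : Fin n, |Z a b| * nn.N (munit a b) := by
      simp [nn.smul]
  _ ≤ ∑ a : Fin m, ∑ b : Fin n, ‖Z‖ * nn.N (munit a b) := by
      refine Finset.sum_le_sum fun a _ => Finset.sum_le_sum fun b _ => ?_
      exact mul_le_mul_of_nonneg_right (abs_entry_le_norm Z a b) (nn.N_nonneg _)
  _ = (∑ a : Fin m, ∑ b : Fin n, nn.N (munit a b)) * ‖Z‖ := by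
      simp [Finset.sum_mul, mul_comm]

lemma N_continuous : Continuous nn.N := by
  obtain ⟨K, hK0, hK⟩ := nn.exists_upper_bound
  rw [Metric.continuous_iff]
  intro X ε hε
  by_cases hK0' : K = 0
  · exact ⟨1, one_pos, fun Y _ => by
      have h1 : nn.N Y = 0 := le_antisymm (by simpa [hK0'] using hK Y) (nn.N_nonneg Y)
      have h2 : nn.N X = 0 := le_antisymm (by simpa [hK0'] using hK X) (nn.N_nonneg X)
      simpa [Real.dist_eq, h1, h2] using hε⟩
  have hKpos : 0 < K := lt_of_le_of_ne hK0 (Ne.symm hK0')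
  refine ⟨ε / K, by positivity, fun Y hY => ?_⟩
  have key : ∀ U V : Fin m → Fin n → ℝ, nn.N U - nn.N V ≤ nn.N (U - V) := by
    intro U V
    have := nn.triangle (U - V) V
    simpa using this
  have h1 : nn.N Y - nn.N X ≤ nn.N (Y - X) := key Y X
  have h2 : nn.N X - nn.N Y ≤ nn.N (Y - X) := by
    have := key X Y
    have hn : nn.N (X - Y) = nn.N (Y - X) := by
      rw [← nn.N_neg (X - Y)]; congr 1; abel
    linarith
  have h3 : nn.N (Y - X) ≤ K * ‖Y - X‖ := hK _
  have h4 : ‖Y - X‖ < ε / K := by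
    rw [dist_eq_norm] at hY; exact hY
  have h5 : K * ‖Y - X‖ < ε := by
    have := mul_lt_mul_of_pos_left h4 hKpos
    rwa [mul_div_cancel₀ _ hKpos.ne'] at this
  rw [Real.dist_eq, abs_lt]
  constructor <;> linarith [nn.N_nonneg (Y - X)]

/-- Lower bound: `c ‖Z‖ ≤ N Z` for some `c > 0`. -/
lemma exists_lower_bound : ∃ c : ℝ, 0 < c ∧ ∀ Z, c * ‖Z‖ ≤ nn.N Z := by
  by_cases hS : (Metric.sphere (0 : Fin m → Fin n → ℝ) 1).Nonempty
  · obtain ⟨Z₀, hZ₀mem, hZ₀min⟩ :=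
      (isCompact_sphere (0 : Fin m → Fin n → ℝ) 1).exists_isMinOn hS
        (nn.N_continuous.continuousOn)
    have hZ₀ : ‖Z₀‖ = 1 := by simpa using hZ₀mem
    have hZ₀ne : Z₀ ≠ 0 := by
      intro h; rw [h] at hZ₀; simp at hZ₀
    refine ⟨nn.N Z₀, nn.pos _ hZ₀ne, fun Z => ?_⟩
    by_cases hZ : Z = 0
    · simp [hZ, nn.zero]
    have hnZ : (0:ℝ) < ‖Z‖ := norm_pos_iff.mpr hZ
    have hmem : (‖Z‖⁻¹ • Z) ∈ Metric.sphere (0 : Fin m → Fin n → ℝ) 1 := by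
      simp [norm_smul, abs_of_pos (inv_pos.mpr hnZ), inv_mul_cancel₀ hnZ.ne']
    have h2 : nn.N (‖Z‖⁻¹ • Z) = ‖Z‖⁻¹ * nn.N Z := by
      rw [nn.smul]; congr 1; exact abs_of_pos (inv_pos.mpr hnZ)
    have this : nn.N Z₀ ≤ ‖Z‖⁻¹ * nn.N Z := by
      have h := hZ₀min hmem
      simp only [Set.mem_setOf_eq] at h
      rwa [h2] at h
    calc nn.N Z₀ * ‖Z‖ ≤ (‖Z‖⁻¹ * nn.N Z) * ‖Z‖ := by
          exact mul_le_mul_of_nonneg_right this hnZ.le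
    _ = nn.N Z := by field_simp
  · refine ⟨1, one_pos, fun Z => ?_⟩
    by_cases hZ : Z = 0
    · simp [hZ, nn.zero]
    have hnZ : (0:ℝ) < ‖Z‖ := norm_pos_iff.mpr hZ
    exact absurd ⟨‖Z‖⁻¹ • Z, by
      simp [norm_smul, abs_of_pos (inv_pos.mpr hnZ), inv_mul_cancel₀ hnZ.ne']⟩ hS

end MatNorm

lemma tip_bound {m n : ℕ} (A : Fin m → Fin n → ℝ) :
    ∃ C : ℝ, 0 ≤ C ∧ ∀ Z, tip A Z ≤ C * ‖Z‖ := by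
  refine ⟨∑ a : Fin m, ∑ b : Fin n, |A a b|,
    Finset.sum_nonneg fun a _ => Finset.sum_nonneg fun b _ => abs_nonneg _, fun Z => ?_⟩
  calc tip A Z ≤ ∑ a : Fin m, ∑ b : Fin n, |A a b| * |Z a b| := by
        refine Finset.sum_le_sum fun a _ => Finset.sum_le_sum fun b _ => ?_
        calc A a b * Z a b ≤ |A a b * Z a b| := le_abs_self _
        _ = |A a b| * |Z a b| := abs_mul _ _
  _ ≤ ∑ a : Fin m, ∑ b : Fin n, |A a b| * ‖Z‖ := by
        refine Finset.sum_le_sum fun a _ => Finset.sum_le_sum fun b _ => ?_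
        exact mul_le_mul_of_nonneg_left (abs_entry_le_norm Z a b) (abs_nonneg _)
  _ = (∑ a : Fin m, ∑ b : Fin n, |A a b|) * ‖Z‖ := by simp [Finset.sum_mul]

namespace MatNorm
variable {m n : ℕ} (nn : MatNorm m n)

def dualSet (A : Fin m → Fin n → ℝ) : Set ℝ := {r : ℝ | ∃ Z, nn.N Z ≤ 1 ∧ r = tip A Z}

lemma dual_eq (A : Fin m → Fin n → ℝ) : nn.dual A = sSup (nn.dualSet A) := rfl

lemma dualSet_nonempty (A : Fin m → Fin n → ℝ) : (nn.dualSet A).Nonempty :=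
  ⟨0, 0, by simp [nn.zero], (tip_zero_right A).symm⟩

lemma dualSet_bddAbove (A : Fin m → Fin n → ℝ) : BddAbove (nn.dualSet A) := by
  obtain ⟨c, hc, hlow⟩ := nn.exists_lower_bound
  obtain ⟨C, hC0, hC⟩ := tip_bound A
  refine ⟨C / c, fun r hr => ?_⟩
  obtain ⟨Z, hZ, rfl⟩ := hr
  have h1 : ‖Z‖ ≤ 1 / c := by
    rw [le_div_iff₀ hc, mul_comm]
    exact (hlow Z).trans hZ
  calc tip A Z ≤ C * ‖Z‖ := hC Z
  _ ≤ C * (1 / c) := mul_le_mul_of_nonneg_left h1 hC0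
  _ = C / c := by ring

lemma tip_le_dual {A Z : Fin m → Fin n → ℝ} (hZ : nn.N Z ≤ 1) : tip A Z ≤ nn.dual A :=
  le_csSup (nn.dualSet_bddAbove A) ⟨Z, hZ, rfl⟩

lemma dual_nonneg (A : Fin m → Fin n → ℝ) : 0 ≤ nn.dual A := by
  have : tip A 0 ≤ nn.dual A := nn.tip_le_dual (by simp [nn.zero])
  simpa [tip_zero_right] using this

lemma tip_le_dual_mul (A Z : Fin m → Fin n → ℝ) : tip A Z ≤ nn.dual A * nn.N Z := by
  by_cases hZ : Z = 0
  · simp [hZ, tip_zero_right, nn.zero]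
  have hNZ : 0 < nn.N Z := nn.pos Z hZ
  have hmem : nn.N ((nn.N Z)⁻¹ • Z) ≤ 1 := by
    rw [nn.smul, abs_of_pos (inv_pos.mpr hNZ), inv_mul_cancel₀ hNZ.ne']
  have h := nn.tip_le_dual (A := A) hmem
  rw [tip_smul_right] at h
  calc tip A Z = nn.N Z * ((nn.N Z)⁻¹ * tip A Z) := by field_simp
  _ ≤ nn.N Z * nn.dual A := mul_le_mul_of_nonneg_left h hNZ.le
  _ = nn.dual A * nn.N Z := mul_comm _ _

lemma dual_add_le (A B : Fin m → Fin n → ℝ) :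
    nn.dual (A + B) ≤ nn.dual A + nn.dual B := by
  refine Real.sSup_le (fun r hr => ?_)
    (add_nonneg (nn.dual_nonneg A) (nn.dual_nonneg B))
  · obtain ⟨Z, hZ, rfl⟩ := hr
    rw [tip_add_left]
    exact add_le_add (nn.tip_le_dual hZ) (nn.tip_le_dual hZ)

lemma dual_le_dual_add_dual_sub (A B : Fin m → Fin n → ℝ) :
    nn.dual A ≤ nn.dual B + nn.dual (A - B) := by
  have := nn.dual_add_le B (A - B)
  simpa using this

lemma dual_neg (A : Fin m → Fin n → ℝ) : nn.dual (-A) = nn.dual A := by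
  unfold MatNorm.dual
  congr 1
  ext r
  constructor
  · rintro ⟨Z, hZ, rfl⟩
    exact ⟨-Z, by rw [nn.N_neg]; exact hZ, by simp [tip, neg_mul_neg]⟩
  · rintro ⟨Z, hZ, rfl⟩
    exact ⟨-Z, by rw [nn.N_neg]; exact hZ, by simp [tip, neg_mul_neg]⟩

lemma exists_near_dual (A : Fin m → Fin n → ℝ) {ε : ℝ} (hε : 0 < ε) :
    ∃ Z, nn.N Z ≤ 1 ∧ nn.dual A - ε < tip A Z := by
  obtain ⟨r, hr, hlt⟩ := exists_lt_of_lt_csSup (nn.dualSet_nonempty A)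
    (show nn.dual A - ε < sSup (nn.dualSet A) by
      rw [← nn.dual_eq]; linarith)
  obtain ⟨Z, hZ, rfl⟩ := hr
  exact ⟨Z, hZ, hlt⟩

end MatNorm

lemma tip_add_right {m n : ℕ} (A B C : Fin m → Fin n → ℝ) :
    tip A (B + C) = tip A B + tip A C := by
  simp [tip, mul_add, Finset.sum_add_distrib]

lemma IsLMOMin.tip_sub_le {m n : ℕ} {nn : MatNorm m n} {G C Y : Fin m → Fin n → ℝ}
    {t : ℝ} (h : IsLMOMin nn G C t Y) (ht : 0 ≤ t) :
    tip G (Y - C) ≤ -(t * nn.dual G) := by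
  have key : ∀ ε : ℝ, 0 < ε → tip G (Y - C) ≤ -(t * nn.dual G) + t * ε := by
    intro ε hε
    obtain ⟨Z, hZ1, hZ2⟩ := nn.exists_near_dual G hε
    have hW : nn.N ((C + (-t) • Z) - C) ≤ t := by
      have heq : (C + (-t) • Z) - C = (-t) • Z := by abel
      rw [heq, nn.smul, abs_neg, abs_of_nonneg ht]
      calc t * nn.N Z ≤ t * 1 := mul_le_mul_of_nonneg_left hZ1 ht
      _ = t := mul_one t
    have h2 := h.2 _ hW
    rw [tip_add_right, tip_smul_right] at h2
    have h3 : tip G (Y - C) = tip G Y - tip G C := tip_sub_right _ _ _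
    have hmul : t * (nn.dual G - ε) ≤ t * tip G Z :=
      mul_le_mul_of_nonneg_left (by linarith) ht
    linarith
  refine le_of_forall_pos_le_add fun δ hδ => ?_
  have h := key (δ / (t + 1)) (by positivity)
  have h2 : t * (δ / (t + 1)) ≤ δ := by
    rw [mul_div_assoc'] ; rw [div_le_iff₀ (by linarith : (0:ℝ) < t + 1)]
    nlinarith
  linarith

/-- Per-block descent bound. -/
lemma block_bound {m n : ℕ} (nn : MatNorm m n) (gX gtl D : Fin m → Fin n → ℝ)
    (L0 L1 ζ : ℝ) (hL0 : 0 ≤ L0) (hL1 : 0 ≤ L1) (hζ0 : 0 ≤ ζ) (hζ1 : ζ < 1)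
    (herr : nn.dual (gtl - gX) ≤ ζ * nn.dual gtl)
    (hD : nn.N D ≤ (1 - ζ) * nn.dual gtl / (L0 + (1 + ζ) * L1 * nn.dual gtl))
    (hlin : tip gtl D ≤
      -(((1 - ζ) * nn.dual gtl / (L0 + (1 + ζ) * L1 * nn.dual gtl)) * nn.dual gtl)) :
    tip gX D + (L0 + L1 * nn.dual gX) / 2 * (nn.N D) ^ 2
      ≤ -((1 - ζ) ^ 2 * (nn.dual gtl) ^ 2 / (2 * (L0 + (1 + ζ) * L1 * nn.dual gtl))) := by
  set Gt := nn.dual gtl with hGtdef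
  set H := L0 + (1 + ζ) * L1 * Gt with hHdef
  set t := (1 - ζ) * Gt / H with htdef
  have hGt : 0 ≤ Gt := nn.dual_nonneg gtl
  have hH0 : 0 ≤ H := by
    have : 0 ≤ (1 + ζ) * L1 * Gt := by positivity
    linarith
  have hswap : nn.dual (gX - gtl) = nn.dual (gtl - gX) := by
    rw [← nn.dual_neg (gtl - gX)]; congr 1; abel
  by_cases hH : H = 0
  · have ht0 : t = 0 := by rw [htdef, hH, div_zero]
    have hD0 : D = 0 := nn.eq_zero_of_N_le_zero (by rw [← ht0]; exact hD)
    rw [hD0, tip_zero_right, nn.zero, hH]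
    simp
  have hHpos : 0 < H := lt_of_le_of_ne hH0 (Ne.symm hH)
  have ht : 0 ≤ t := div_nonneg (mul_nonneg (by linarith) hGt) hH0
  have hND0 : 0 ≤ nn.N D := nn.N_nonneg D
  have hG : nn.dual gX ≤ (1 + ζ) * Gt := by
    have h1 := nn.dual_le_dual_add_dual_sub gX gtl
    rw [hswap] at h1
    linarith
  have hGX0 : 0 ≤ nn.dual gX := nn.dual_nonneg gX
  have hsplit : tip gX D = tip gtl D + tip (gX - gtl) D := by
    rw [← tip_add_left]; congr 1; abel
  have herr' : tip (gX - gtl) D ≤ ζ * Gt * nn.N D := by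
    calc tip (gX - gtl) D ≤ nn.dual (gX - gtl) * nn.N D := nn.tip_le_dual_mul _ _
    _ ≤ (ζ * Gt) * nn.N D := by
        refine mul_le_mul_of_nonneg_right ?_ hND0
        rw [hswap]; exact herr
  have hquad : (L0 + L1 * nn.dual gX) / 2 * (nn.N D) ^ 2 ≤ H / 2 * t ^ 2 := by
    have h1 : L0 + L1 * nn.dual gX ≤ H := by
      have := mul_le_mul_of_nonneg_left hG hL1
      rw [hHdef]; nlinarith
    have h2 : (nn.N D) ^ 2 ≤ t ^ 2 := by
      exact pow_le_pow_left₀ hND0 hD 2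
    have h3 : 0 ≤ L0 + L1 * nn.dual gX := by positivity
    calc (L0 + L1 * nn.dual gX) / 2 * (nn.N D) ^ 2
        ≤ (L0 + L1 * nn.dual gX) / 2 * t ^ 2 := by
          exact mul_le_mul_of_nonneg_left h2 (by linarith)
    _ ≤ H / 2 * t ^ 2 := by
          exact mul_le_mul_of_nonneg_right (by linarith) (sq_nonneg t)
  have hlin' : ζ * Gt * nn.N D ≤ ζ * Gt * t :=
    mul_le_mul_of_nonneg_left hD (by positivity)
  have hfinal : -(t * Gt) + ζ * Gt * t + H / 2 * t ^ 2
      = -((1 - ζ) ^ 2 * Gt ^ 2 / (2 * H)) := by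
    rw [htdef]; field_simp; ring
  linarith [hsplit, herr', hquad, hlin', hlin, hfinal]

/-- One-step descent with an inexact gradient `g̃` with relative error `ζ ∈ [0,1)`:
if each `X⁺ᵢ` minimizes `⟨g̃ᵢ, ·⟩` over the ball of radius
`tᵢ = (1−ζ)‖g̃ᵢ‖⋆/(L⁰ᵢ + (1+ζ)L¹ᵢ‖g̃ᵢ‖⋆)` centered at `Xᵢ`, then
`f(X⁺) ≤ f(X) − Σᵢ (1−ζ)²‖g̃ᵢ‖⋆²/(2(L⁰ᵢ + (1+ζ)L¹ᵢ‖g̃ᵢ‖⋆))`. -/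
theorem stmt_12 {p : ℕ} {m n : Fin p → ℕ}
    (nn : ∀ i, MatNorm (m i) (n i))
    (f : (∀ i, Fin (m i) → Fin (n i) → ℝ) → ℝ)
    (g : (∀ i, Fin (m i) → Fin (n i) → ℝ) → ∀ i, Fin (m i) → Fin (n i) → ℝ)
    (hdiff : ContDiff ℝ 1 f)
    (hgrad : ∀ X H, fderiv ℝ f X H = ∑ i, tip (g X i) (H i))
    (L0 L1 : Fin p → ℝ) (hL0 : ∀ i, 0 ≤ L0 i) (hL1 : ∀ i, 0 ≤ L1 i)
    (hsmooth : ∀ i X Y, (nn i).dual (g X i - g Y i)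
      ≤ (L0 i + L1 i * (nn i).dual (g X i)) * (nn i).N (X i - Y i))
    (ζ : ℝ) (hζ0 : 0 ≤ ζ) (hζ1 : ζ < 1)
    (X Xp : ∀ i, Fin (m i) → Fin (n i) → ℝ)
    (gt : ∀ i, Fin (m i) → Fin (n i) → ℝ)
    (hgt : ∀ i, (nn i).dual (gt i - g X i) ≤ ζ * (nn i).dual (gt i))
    (hupd : ∀ i, IsLMOMin (nn i) (gt i) (X i)
      ((1 - ζ) * (nn i).dual (gt i) / (L0 i + (1 + ζ) * L1 i * (nn i).dual (gt i)))
      (Xp i)) :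
    f Xp ≤ f X - ∑ i, (1 - ζ) ^ 2 * ((nn i).dual (gt i)) ^ 2
      / (2 * (L0 i + (1 + ζ) * L1 i * (nn i).dual (gt i))) := by
  classical
  set D : ∀ i, Fin (m i) → Fin (n i) → ℝ := Xp - X with hDdef
  have hXp : Xp = X + D := by rw [hDdef]; abel
  set a : ℝ := ∑ i, tip (g X i) (D i) with hadef
  set b : ℝ := ∑ i, (L0 i + L1 i * (nn i).dual (g X i)) * ((nn i).N (D i)) ^ 2 with hbdef
  -- the auxiliary function
  set ψ : ℝ → ℝ := fun s => f (X + s • D) - (a * s + b * s ^ 2 / 2) with hψdef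
  have hdiffble : Differentiable ℝ f := hdiff.differentiable one_ne_zero
  have hγ : ∀ s : ℝ, HasDerivAt (fun s : ℝ => X + s • D) D s := by
    intro s
    simpa using ((hasDerivAt_id s).smul_const D).const_add X
  have hφ : ∀ s : ℝ, HasDerivAt (fun s : ℝ => f (X + s • D))
      (fderiv ℝ f (X + s • D) D) s := by
    intro s
    exact (hdiffble (X + s • D)).hasFDerivAt.comp_hasDerivAt s (hγ s)
  have hpoly : ∀ s : ℝ, HasDerivAt (fun s : ℝ => a * s + b * s ^ 2 / 2) (a + b * s) s := by
    intro s
    have h1 : HasDerivAt (fun s : ℝ => a * s) a s := by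
      simpa using (hasDerivAt_id s).const_mul a
    have h2 : HasDerivAt (fun s : ℝ => b * s ^ 2 / 2) (b * s) s := by
      have := ((hasDerivAt_pow 2 s).const_mul b).div_const 2
      simpa using this.congr_deriv (by ring)
    exact h1.add h2
  have hψ : ∀ s : ℝ, HasDerivAt ψ (fderiv ℝ f (X + s • D) D - (a + b * s)) s :=
    fun s => (hφ s).sub (hpoly s)
  -- derivative bound on (0,1)
  have hderiv_le : ∀ s ∈ interior (Set.Icc (0:ℝ) 1), deriv ψ s ≤ 0 := by
    intro s hs
    rw [interior_Icc] at hs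
    have hs0 : 0 ≤ s := hs.1.le
    rw [(hψ s).deriv]
    have hsum : fderiv ℝ f (X + s • D) D = ∑ i, tip (g (X + s • D) i) (D i) := hgrad _ _
    have hterm : ∀ i : Fin p, tip (g (X + s • D) i) (D i)
        ≤ tip (g X i) (D i) + (L0 i + L1 i * (nn i).dual (g X i)) * ((nn i).N (D i)) ^ 2 * s := by
      intro i
      have hsplit : tip (g (X + s • D) i) (D i)
          = tip (g X i) (D i) + tip (g (X + s • D) i - g X i) (D i) := by
        rw [← tip_add_left]; congr 1; abel
      have hdualswap : (nn i).dual (g (X + s • D) i - g X i)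
          = (nn i).dual (g X i - g (X + s • D) i) := by
        rw [← (nn i).dual_neg (g X i - g (X + s • D) i)]; congr 1; abel
      have hNpt : (nn i).N (X i - (X + s • D) i) = s * (nn i).N (D i) := by
        have heq : X i - (X + s • D) i = (-s) • D i := by
          funext x y
          simp only [Pi.sub_apply, Pi.add_apply, Pi.smul_apply, smul_eq_mul, neg_smul]
          ring
        rw [heq, (nn i).smul, abs_neg, abs_of_nonneg hs0]
      have hd : (nn i).dual (g (X + s • D) i - g X i)
          ≤ (L0 i + L1 i * (nn i).dual (g X i)) * (s * (nn i).N (D i)) := by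
        rw [hdualswap, ← hNpt]
        exact hsmooth i X (X + s • D)
      have hbound : tip (g (X + s • D) i - g X i) (D i)
          ≤ (L0 i + L1 i * (nn i).dual (g X i)) * ((nn i).N (D i)) ^ 2 * s := by
        calc tip (g (X + s • D) i - g X i) (D i)
            ≤ (nn i).dual (g (X + s • D) i - g X i) * (nn i).N (D i) :=
              (nn i).tip_le_dual_mul _ _
        _ ≤ ((L0 i + L1 i * (nn i).dual (g X i)) * (s * (nn i).N (D i))) * (nn i).N (D i) :=
              mul_le_mul_of_nonneg_right hd ((nn i).N_nonneg _)
        _ = (L0 i + L1 i * (nn i).dual (g X i)) * ((nn i).N (D i)) ^ 2 * s := by ring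
      linarith [hsplit, hbound]
    have hsum_le : (∑ i, tip (g (X + s • D) i) (D i)) ≤ a + b * s := by
      calc (∑ i, tip (g (X + s • D) i) (D i))
          ≤ ∑ i, (tip (g X i) (D i)
              + (L0 i + L1 i * (nn i).dual (g X i)) * ((nn i).N (D i)) ^ 2 * s) :=
            Finset.sum_le_sum fun i _ => hterm i
      _ = a + b * s := by
            rw [Finset.sum_add_distrib, hadef, hbdef, Finset.sum_mul]
    rw [hsum]
    linarith
  -- antitone
  have hA : AntitoneOn ψ (Set.Icc (0:ℝ) 1) := by
    refine antitoneOn_of_deriv_nonpos (convex_Icc 0 1) ?_ ?_ hderiv_le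
    · exact fun s _ => ((hψ s).continuousAt).continuousWithinAt
    · exact fun s _ => ((hψ s).differentiableAt).differentiableWithinAt
  have hψ10 : ψ 1 ≤ ψ 0 := hA (Set.left_mem_Icc.mpr zero_le_one)
    (Set.right_mem_Icc.mpr zero_le_one) zero_le_one
  have hψ0 : ψ 0 = f X := by simp [hψdef]
  have hψ1 : ψ 1 = f Xp - (a + b / 2) := by
    rw [hψdef]
    simp only [one_smul, one_pow, mul_one]
    rw [← hXp]
  have hmain : f Xp ≤ f X + a + b / 2 := by
    rw [hψ1, hψ0] at hψ10; linarith
  -- apply per-block bounds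
  have hblock : ∀ i : Fin p,
      tip (g X i) (D i) + (L0 i + L1 i * (nn i).dual (g X i)) / 2 * ((nn i).N (D i)) ^ 2
        ≤ -((1 - ζ) ^ 2 * ((nn i).dual (gt i)) ^ 2
          / (2 * (L0 i + (1 + ζ) * L1 i * (nn i).dual (gt i)))) := by
    intro i
    have hH0 : 0 ≤ L0 i + (1 + ζ) * L1 i * (nn i).dual (gt i) := by
      have h1 : 0 ≤ (1 + ζ) * L1 i * (nn i).dual (gt i) :=
        mul_nonneg (mul_nonneg (by linarith) (hL1 i)) ((nn i).dual_nonneg _)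
      linarith [hL0 i]
    have ht0 : 0 ≤ (1 - ζ) * (nn i).dual (gt i)
        / (L0 i + (1 + ζ) * L1 i * (nn i).dual (gt i)) :=
      div_nonneg (mul_nonneg (by linarith) ((nn i).dual_nonneg _)) hH0
    have hDi : D i = Xp i - X i := by simp [hDdef]
    refine block_bound (nn i) (g X i) (gt i) (D i) (L0 i) (L1 i) ζ
      (hL0 i) (hL1 i) hζ0 hζ1 (hgt i) ?_ ?_
    · rw [hDi]; exact (hupd i).1
    · rw [hDi]; exact (hupd i).tip_sub_le ht0
  have hsum2 : a + b / 2 ≤ -∑ i, (1 - ζ) ^ 2 * ((nn i).dual (gt i)) ^ 2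
      / (2 * (L0 i + (1 + ζ) * L1 i * (nn i).dual (gt i))) := by
    rw [hadef, hbdef, ← Finset.sum_neg_distrib]
    rw [Finset.sum_div, ← Finset.sum_add_distrib]
    refine Finset.sum_le_sum fun i _ => ?_
    have := hblock i
    linarith
  linarith
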